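/- Let A (n×n) and B (m×m) be square ℕ-matrices. If A and B are shift equivalent, then sign(det(I − Aᵀ)) = sign(det(I − Bᵀ)), where sign(x) ∈ {−1, 0, 1}. -/

import Mathlib

open Matrix

/-- `(R,S)` is a shift equivalence of lag `l` from the `n × n` ℕ-matrix `A` to the
`m × m` ℕ-matrix `B`. -/
def IsShiftEquivalence {n m : ℕ} (A : Matrix (Fin n) (Fin n) ℕ) (B : Matrix (Fin m) (Fin m) ℕ)
    (R : Matrix (Fin n) (Fin m) ℕ) (S : Matrix (Fin m) (Fin n) ℕ) (l : ℕ) : Prop :=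
  1 ≤ l ∧ A ^ l = R * S ∧ B ^ l = S * R ∧ A * R = R * B ∧ B * S = S * A

/-- `(R,S)` is a unital shift equivalence of lag `l` from `A` to `B`:
a shift equivalence such that `(Bᵀ)^p Rᵀ 𝟙 = (Bᵀ)^(p+q) 𝟙` for some `p q : ℕ`. -/
def IsUnitalShiftEquivalence {n m : ℕ} (A : Matrix (Fin n) (Fin n) ℕ)
    (B : Matrix (Fin m) (Fin m) ℕ)
    (R : Matrix (Fin n) (Fin m) ℕ) (S : Matrix (Fin m) (Fin n) ℕ) (l : ℕ) : Prop :=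
  IsShiftEquivalence A B R S l ∧
    ∃ p q : ℕ, (Bᵀ ^ p) *ᵥ (Rᵀ *ᵥ fun _ => 1) = (Bᵀ ^ (p + q)) *ᵥ (fun _ => 1)

/-- `A` and `B` are unitally shift equivalent. -/
def UnitallyShiftEquivalent {n m : ℕ} (A : Matrix (Fin n) (Fin n) ℕ)
    (B : Matrix (Fin m) (Fin m) ℕ) : Prop :=
  ∃ (l : ℕ) (R : Matrix (Fin n) (Fin m) ℕ) (S : Matrix (Fin m) (Fin n) ℕ),
    IsUnitalShiftEquivalence A B R S l

/-- `A` and `B` are shift equivalent. -/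
def ShiftEquivalent {n m : ℕ} (A : Matrix (Fin n) (Fin n) ℕ)
    (B : Matrix (Fin m) (Fin m) ℕ) : Prop :=
  ∃ (l : ℕ) (R : Matrix (Fin n) (Fin m) ℕ) (S : Matrix (Fin m) (Fin n) ℕ),
    IsShiftEquivalence A B R S l


section Aux
open Polynomial

namespace SignDetSE

variable {n : ℕ}

variable {n : ℕ}

lemma eval_charpoly' (M : Matrix (Fin n) (Fin n) ℂ) (a : ℂ) :
    M.charpoly.eval a = det (a • (1 : Matrix (Fin n) (Fin n) ℂ) - M) := by
  rw [Matrix.charpoly, ← Polynomial.coe_evalRingHom, RingHom.map_det]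
  congr 1
  ext i j
  by_cases h : i = j <;>
    simp [h, charmatrix_apply_eq, charmatrix_apply_ne, Matrix.one_apply, Matrix.sub_apply,
      Matrix.smul_apply]

lemma det_aeval_prod (M : Matrix (Fin n) (Fin n) ℂ) (s : Multiset ℂ) :
    det (aeval M ((s.map fun z => X - C z).prod)) =
      (s.map fun z => det (M - z • (1 : Matrix (Fin n) (Fin n) ℂ))).prod := by
  induction s using Multiset.induction with
  | empty => simp
  | cons a s ih =>
      rw [Multiset.map_cons, Multiset.prod_cons, _root_.map_mul, det_mul,
        Multiset.map_cons, Multiset.prod_cons, ih]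
      congr 1
      simp [Algebra.algebraMap_eq_smul_one]

lemma charpoly_roots_card (M : Matrix (Fin n) (Fin n) ℂ) : M.charpoly.roots.card = n := by
  rw [splits_iff_card_roots.mp (IsAlgClosed.splits M.charpoly), M.charpoly_natDegree_eq_dim,
    Fintype.card_fin]

lemma charpoly_eq_prod (M : Matrix (Fin n) (Fin n) ℂ) :
    M.charpoly = (M.charpoly.roots.map fun r => X - C r).prod :=
  (IsAlgClosed.splits M.charpoly).eq_prod_roots_of_monic (M.charpoly_monic)

lemma det_smul_one_sub_pow (M : Matrix (Fin n) (Fin n) ℂ) {k : ℕ} (hk : k ≠ 0) (a : ℂ) :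
    det (a • (1 : Matrix (Fin n) (Fin n) ℂ) - M ^ k) =
      (M.charpoly.roots.map fun r => a - r ^ k).prod := by
  have hcardσ : M.charpoly.roots.card = n := charpoly_roots_card M
  -- p = X^k - C a
  have hp : (X ^ k - C a : ℂ[X]) = ((nthRoots k a).map fun z => X - C z).prod := by
    have := (IsAlgClosed.splits (X ^ k - C a : ℂ[X])).eq_prod_roots_of_monic
      (monic_X_pow_sub_C a hk)
    simpa [nthRoots] using this
  have hcard : (nthRoots k a).card = k := by
    have := splits_iff_card_roots.mp (IsAlgClosed.splits (X ^ k - C a : ℂ[X]))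
    simpa [nthRoots, natDegree_X_pow_sub_C] using this
  -- evaluate p at each root r of charpoly
  have hevalp : ∀ r : ℂ, ((nthRoots k a).map fun z => r - z).prod = r ^ k - a := by
    intro r
    have := congrArg (Polynomial.eval r) hp
    simpa [eval_multiset_prod, Multiset.map_map, Function.comp] using this.symm
  -- det (M - z•1) = (-1)^n * prod (z - r)
  have hdet1 : ∀ z : ℂ, det (M - z • (1 : Matrix (Fin n) (Fin n) ℂ)) =
      (-1) ^ n * (M.charpoly.roots.map fun r => z - r).prod := by
    intro z
    have h1 : M - z • (1 : Matrix (Fin n) (Fin n) ℂ) =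
        -(z • (1 : Matrix (Fin n) (Fin n) ℂ) - M) := by exact (neg_sub _ _).symm
    rw [h1, det_neg, Fintype.card_fin, ← eval_charpoly']
    congr 1
    conv_lhs => rw [charpoly_eq_prod M]
    simp [eval_multiset_prod, Multiset.map_map, Function.comp]
  -- main computation
  have hsub : a • (1 : Matrix (Fin n) (Fin n) ℂ) - M ^ k = -(M ^ k - a • 1) := by
    rw [neg_sub]
  have haeval : (M ^ k - a • (1 : Matrix (Fin n) (Fin n) ℂ)) = aeval M (X ^ k - C a) := by
    simp [Algebra.algebraMap_eq_smul_one]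
  rw [hsub, det_neg, Fintype.card_fin, haeval, hp, det_aeval_prod]
  have : ((nthRoots k a).map fun z => det (M - z • (1 : Matrix (Fin n) (Fin n) ℂ))).prod =
      ((-1 : ℂ) ^ (n * k)) *
        ((nthRoots k a).map fun z => (M.charpoly.roots.map fun r => z - r).prod).prod := by
    simp only [hdet1]
    rw [Multiset.prod_map_mul, Multiset.map_const', Multiset.prod_replicate, hcard, ← pow_mul]
  rw [this, Multiset.prod_map_prod_map]
  have hinner : ∀ r : ℂ, ((nthRoots k a).map fun z => z - r).prod = (-1) ^ k * (r ^ k - a) := by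
    intro r
    have : ((nthRoots k a).map fun z => z - r) = ((nthRoots k a).map fun z => -(r - z)) := by
      simp [neg_sub]
    rw [this]
    rw [show ((nthRoots k a).map fun z => -(r - z)) =
      ((nthRoots k a).map fun z => (r - z)).map (fun x => -x) by simp [Multiset.map_map]]
    rw [Multiset.prod_map_neg]
    simp [hcard, hevalp r]
  have : (M.charpoly.roots.map fun r => ((nthRoots k a).map fun z => z - r).prod).prod
      = ((-1 : ℂ) ^ (k * n)) * (M.charpoly.roots.map fun r => r ^ k - a).prod := by
    simp only [hinner]
    rw [Multiset.prod_map_mul, Multiset.map_const', Multiset.prod_replicate, hcardσ, ← pow_mul]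
  rw [this]
  have hfinal : (M.charpoly.roots.map fun r => r ^ k - a).prod =
      ((-1 : ℂ) ^ n) * (M.charpoly.roots.map fun r => a - r ^ k).prod := by
    rw [show (M.charpoly.roots.map fun r => r ^ k - a) =
      (M.charpoly.roots.map fun r => a - r ^ k).map (fun x => -x) by
        simp [Multiset.map_map]]
    rw [Multiset.prod_map_neg]
    simp [hcardσ]
  rw [hfinal, show (k * n) = n * k by ring]
  set P := (M.charpoly.roots.map fun r => a - r ^ k).prod
  rw [show ((-1 : ℂ)) ^ n * ((-1) ^ (n * k) * ((-1) ^ (n * k) * ((-1) ^ n * P))) =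
    (((-1 : ℂ)) ^ (n + n)) * ((-1) ^ (n * k + n * k)) * P by rw [pow_add, pow_add]; ring]
  rw [← two_mul, ← two_mul, pow_mul, pow_mul]
  norm_num

lemma charpoly_pow_roots (M : Matrix (Fin n) (Fin n) ℂ) {k : ℕ} (hk : k ≠ 0) :
    (M ^ k).charpoly.roots = M.charpoly.roots.map fun r => r ^ k := by
  have hpoly : (M ^ k).charpoly = ((M.charpoly.roots.map fun r => r ^ k).map
      fun r => X - C r).prod := by
    apply Polynomial.funext
    intro a
    rw [eval_charpoly', det_smul_one_sub_pow M hk a]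
    simp [eval_multiset_prod, Multiset.map_map, Function.comp]
  rw [hpoly, roots_multiset_prod_X_sub_C]

lemma trace_pow_eq (M : Matrix (Fin n) (Fin n) ℂ) {k : ℕ} (hk : k ≠ 0) :
    trace (M ^ k) = (M.charpoly.roots.map fun r => r ^ k).sum := by
  rw [Matrix.trace_eq_sum_roots_charpoly, charpoly_pow_roots M hk]

lemma det_one_sub_eq (M : Matrix (Fin n) (Fin n) ℂ) :
    det (1 - M) = (M.charpoly.roots.map fun r => 1 - r).prod := by
  have := eval_charpoly' M 1
  rw [one_smul] at this
  rw [← this]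
  conv_lhs => rw [charpoly_eq_prod M]
  simp [eval_multiset_prod, Multiset.map_map, Function.comp]

lemma powsum_sum (s : Multiset ℂ) (F : Finset ℂ) (hsF : s.toFinset ⊆ F) (k : ℕ) :
    (s.map fun r => r ^ k).sum = ∑ a ∈ F, (s.count a : ℂ) * a ^ k := by
  rw [Finset.sum_multiset_map_count]
  rw [Finset.sum_subset hsF]
  · simp [nsmul_eq_mul]
  · intro a _ ha
    simp [Multiset.count_eq_zero_of_notMem (by simpa using ha)]

lemma multiset_eq_of_powsums (s t : Multiset ℂ) (hs : (0 : ℂ) ∉ s) (ht : (0 : ℂ) ∉ t)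
    (l : ℕ) (h : ∀ k : ℕ, l ≤ k → (s.map fun r => r ^ k).sum = (t.map fun r => r ^ k).sum) :
    s = t := by
  classical
  set F : Finset ℂ := (s + t).toFinset with hF
  have hsF : s.toFinset ⊆ F := by intro a ha; simp_all [hF]
  have htF : t.toFinset ⊆ F := by intro a ha; simp_all [hF]
  have hF0 : ∀ a ∈ F, a ≠ 0 := by
    intro a ha h0
    rcases Multiset.mem_add.mp (Multiset.mem_toFinset.mp ha) with h' | h'
    · exact hs (h0 ▸ h')
    · exact ht (h0 ▸ h')
  set K := Fintype.card ↥F with hK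
  let e : ↥F ≃ Fin K := Fintype.equivFin ↥F
  let v : Fin K → ℂ := fun i => ((e.symm i : ↥F) : ℂ)
  have hv_inj : Function.Injective v := fun i j hij => by
    have := Subtype.ext hij
    simpa using congrArg e (this)
  have hv_ne : ∀ i, v i ≠ 0 := fun i => hF0 _ (e.symm i).2
  let w : Fin K → ℂ := fun j => (s.count (v j) : ℂ) - (t.count (v j) : ℂ)
  let M : Matrix (Fin K) (Fin K) ℂ := fun i j => v j ^ (l + (i : ℕ))
  have hsum : ∀ (u : Multiset ℂ), u.toFinset ⊆ F → ∀ k : ℕ,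
      (u.map fun r => r ^ k).sum = ∑ j : Fin K, (u.count (v j) : ℂ) * v j ^ k := by
    intro u hu k
    rw [powsum_sum u F hu k, ← Finset.sum_coe_sort]
    exact (Equiv.sum_comp e.symm fun x : ↥F => (u.count (x : ℂ) : ℂ) * (x : ℂ) ^ k).symm
  have hmul : M.mulVec w = 0 := by
    funext i
    have h1 := hsum s hsF (l + i)
    have h2 := hsum t htF (l + i)
    have h3 := h (l + i) (Nat.le_add_right _ _)
    simp only [Matrix.mulVec, dotProduct, Pi.zero_apply, M, w]
    rw [h1, h2] at h3
    calc ∑ j, v j ^ (l + (i : ℕ)) * ((s.count (v j) : ℂ) - (t.count (v j) : ℂ))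
        = (∑ j : Fin K, (s.count (v j) : ℂ) * v j ^ (l + (i : ℕ)))
          - ∑ j : Fin K, (t.count (v j) : ℂ) * v j ^ (l + (i : ℕ)) := by
          rw [← Finset.sum_sub_distrib]; congr 1; funext j; ring
      _ = 0 := by rw [h3, sub_self]
  have hdet : M.det ≠ 0 := by
    have hMeq : M = (Matrix.vandermonde v)ᵀ * Matrix.diagonal (fun j => v j ^ l) := by
      ext i j
      rw [Matrix.mul_diagonal]
      simp [Matrix.vandermonde, M, pow_add, mul_comm]
    rw [hMeq, det_mul, det_transpose, Matrix.det_vandermonde, Matrix.det_diagonal]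
    apply mul_ne_zero
    · apply Finset.prod_ne_zero_iff.mpr
      intro i _
      apply Finset.prod_ne_zero_iff.mpr
      intro j hj
      exact sub_ne_zero_of_ne fun hvv => (Finset.mem_Ioi.mp hj).ne' (hv_inj hvv)
    · exact Finset.prod_ne_zero_iff.mpr fun j _ => pow_ne_zero _ (hv_ne j)
  have hw : w = 0 := Matrix.eq_zero_of_mulVec_eq_zero hdet hmul
  have hcount : ∀ a : ℂ, s.count a = t.count a := by
    intro a
    by_cases ha : a ∈ F
    · have : a = v (e ⟨a, ha⟩) := by simp [v]
      have hwj := congrFun hw (e ⟨a, ha⟩)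
      simp only [w, Pi.zero_apply, sub_eq_zero] at hwj
      rw [this]
      exact_mod_cast hwj
    · have h1 : a ∉ s := fun hh => ha (hsF (Multiset.mem_toFinset.mpr hh))
      have h2 : a ∉ t := fun hh => ha (htF (Multiset.mem_toFinset.mpr hh))
      rw [Multiset.count_eq_zero_of_notMem h1, Multiset.count_eq_zero_of_notMem h2]
  exact Multiset.ext.mpr hcount
lemma powsum_filter_ne_zero (σ : Multiset ℂ) {k : ℕ} (hk : k ≠ 0) :
    ((σ.filter (· ≠ 0)).map fun r => r ^ k).sum = (σ.map fun r => r ^ k).sum := by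
  classical
  conv_rhs => rw [← Multiset.filter_add_not (· ≠ 0) σ]
  rw [Multiset.map_add, Multiset.sum_add]
  have : ((σ.filter fun a => ¬a ≠ 0).map fun r => r ^ k).sum = 0 := by
    apply Multiset.sum_eq_zero
    intro x hx
    obtain ⟨r, hr, rfl⟩ := Multiset.mem_map.mp hx
    have : r = 0 := by simpa using (Multiset.mem_filter.mp hr).2
    simp [this, zero_pow hk]
  rw [this, add_zero]

lemma prod_one_sub_filter_ne_zero (σ : Multiset ℂ) :
    ((σ.filter (· ≠ 0)).map fun r => 1 - r).prod = (σ.map fun r => 1 - r).prod := by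
  classical
  conv_rhs => rw [← Multiset.filter_add_not (· ≠ 0) σ]
  rw [Multiset.map_add, Multiset.prod_add]
  have : ((σ.filter fun a => ¬a ≠ 0).map fun r => 1 - r).prod = 1 := by
    apply Multiset.prod_eq_one
    intro x hx
    obtain ⟨r, hr, rfl⟩ := Multiset.mem_map.mp hx
    have : r = 0 := by simpa using (Multiset.mem_filter.mp hr).2
    simp [this]
  rw [this, mul_one]

theorem det_one_sub_eq_of_SE {n m : ℕ} (A : Matrix (Fin n) (Fin n) ℕ)
    (B : Matrix (Fin m) (Fin m) ℕ) (h : ShiftEquivalent A B) :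
    det (1 - A.map (Nat.cast : ℕ → ℂ)) = det (1 - B.map (Nat.cast : ℕ → ℂ)) := by
  classical
  obtain ⟨l, R, S, hl, hAl, hBl, hAR, hBS⟩ := h
  have map_mul' : ∀ {p q r : ℕ} (X : Matrix (Fin p) (Fin q) ℕ) (Y : Matrix (Fin q) (Fin r) ℕ),
      (X * Y).map (Nat.cast : ℕ → ℂ) = X.map (Nat.cast) * Y.map (Nat.cast) := by
    intro p q r X Y
    exact Matrix.map_mul (f := Nat.castRingHom ℂ)
  set c := (Nat.castRingHom ℂ)
  set A' := A.map (Nat.cast : ℕ → ℂ) with hA'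
  set B' := B.map (Nat.cast : ℕ → ℂ) with hB'
  set R' := R.map (Nat.cast : ℕ → ℂ) with hR'
  set S' := S.map (Nat.cast : ℕ → ℂ) with hS'
  have hmapA : ∀ k : ℕ, (A ^ k).map (Nat.cast : ℕ → ℂ) = A' ^ k := fun k => by
    simpa [RingHom.mapMatrix_apply, c] using map_pow (c.mapMatrix) A k
  have hmapB : ∀ k : ℕ, (B ^ k).map (Nat.cast : ℕ → ℂ) = B' ^ k := fun k => by
    simpa [RingHom.mapMatrix_apply, c] using map_pow (c.mapMatrix) B k
  have hAl' : A' ^ l = R' * S' := by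
    rw [← hmapA, hAl, map_mul']
    rfl
  have hBl' : B' ^ l = S' * R' := by
    rw [← hmapB, hBl, map_mul']
    rfl
  have hAR' : A' * R' = R' * B' := by
    exact (map_mul' A R).symm.trans ((congrArg (fun M => Matrix.map M (Nat.cast : ℕ → ℂ)) hAR).trans (map_mul' R B))
  have hARj : ∀ j : ℕ, A' ^ j * R' = R' * B' ^ j := by
    intro j
    induction j with
    | zero => simp
    | succ j ih =>
        rw [pow_succ, pow_succ, Matrix.mul_assoc, hAR', ← Matrix.mul_assoc, ih, Matrix.mul_assoc]
  have htr : ∀ k : ℕ, l ≤ k → trace (A' ^ k) = trace (B' ^ k) := by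
    intro k hk
    obtain ⟨j, rfl⟩ : ∃ j, k = j + l := ⟨k - l, (Nat.sub_add_cancel hk).symm⟩
    rw [pow_add, pow_add, hAl', hBl']
    have e1 : A' ^ j * (R' * S') = R' * (B' ^ j * S') := by rw [← Matrix.mul_assoc, hARj j, Matrix.mul_assoc]
    rw [e1, Matrix.trace_mul_comm, Matrix.mul_assoc]
  -- power sums of nonzero roots agree
  have hst : A'.charpoly.roots.filter (· ≠ 0) = B'.charpoly.roots.filter (· ≠ 0) := by
    apply multiset_eq_of_powsums _ _ ?_ ?_ l ?_
    · intro h0; simpa using (Multiset.mem_filter.mp h0).2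
    · intro h0; simpa using (Multiset.mem_filter.mp h0).2
    · intro k hk
      have hk0 : k ≠ 0 := by omega
      rw [powsum_filter_ne_zero _ hk0, powsum_filter_ne_zero _ hk0,
        ← trace_pow_eq A' hk0, ← trace_pow_eq B' hk0]
      exact htr k hk
  rw [det_one_sub_eq A', det_one_sub_eq B', ← prod_one_sub_filter_ne_zero A'.charpoly.roots,
    ← prod_one_sub_filter_ne_zero B'.charpoly.roots, hst]

theorem det_one_sub_int_eq {n m : ℕ} (A : Matrix (Fin n) (Fin n) ℕ)
    (B : Matrix (Fin m) (Fin m) ℕ) (h : ShiftEquivalent A B) :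
    Matrix.det (1 - A.map (Nat.cast : ℕ → ℤ)) = Matrix.det (1 - B.map (Nat.cast : ℕ → ℤ)) := by
  have hC := det_one_sub_eq_of_SE A B h
  have cast_eq : ∀ {p : ℕ} (M : Matrix (Fin p) (Fin p) ℕ),
      ((Matrix.det (1 - M.map (Nat.cast : ℕ → ℤ)) : ℤ) : ℂ)
        = Matrix.det (1 - M.map (Nat.cast : ℕ → ℂ)) := by
    intro p M
    rw [show ((Matrix.det (1 - M.map (Nat.cast : ℕ → ℤ)) : ℤ) : ℂ)
      = (Int.castRingHom ℂ) (Matrix.det (1 - M.map (Nat.cast : ℕ → ℤ))) from rfl,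
      RingHom.map_det (Int.castRingHom ℂ)]
    congr 1
    ext i j
    by_cases hij : i = j <;>
      simp [Matrix.sub_apply, Matrix.map_apply, Matrix.one_apply, hij]
  exact_mod_cast (cast_eq A).trans (hC.trans (cast_eq B).symm)

end SignDetSE

end Aux


/-- **Statement 6.** The sign of `det (I - Aᵀ)` is invariant under shift equivalence. -/
theorem sign_det_invariant_of_shiftEquivalent
    {n m : ℕ} (A : Matrix (Fin n) (Fin n) ℕ) (B : Matrix (Fin m) (Fin m) ℕ)
    (h : ShiftEquivalent A B) :
    Int.sign (Matrix.det (1 - (A.map (Nat.cast : ℕ → ℤ))ᵀ)) =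
      Int.sign (Matrix.det (1 - (B.map (Nat.cast : ℕ → ℤ))ᵀ)) := by
  have hdetT : ∀ {p : ℕ} (M : Matrix (Fin p) (Fin p) ℤ),
      Matrix.det (1 - Mᵀ) = Matrix.det (1 - M) := by
    intro p M
    rw [show (1 - Mᵀ) = (1 - M)ᵀ by rw [Matrix.transpose_sub, Matrix.transpose_one],
      Matrix.det_transpose]
  rw [hdetT, hdetT]
  congr 1
  exact SignDetSE.det_one_sub_int_eq A B h
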